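/- Let Q = Q(N,(m_i),(X_i)) be the quandle of the construction, and let N′ be the set of n ∈ N such that the formula d(x) = x + n + X_i (for all i ∈ I and x ∈ Q_i) defines a displacement of Q. Then N′ is a Λ-submodule of N, and the map N′ → Dis(Q) sending n to the displacement d_n given by d_n(x) = x + n + X_i is a surjective Λ-linear homomorphism (with respect to the Λ-module structure on Dis(Q)). -/

import Mathlib

open LaurentPolynomial

set_option synthInstance.maxHeartbeats 1000000
set_option maxHeartbeats 1000000

noncomputable section

/-- The ring `Λ = ℤ[t,t⁻¹]` of Laurent polynomials with integer coefficients. -/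
abbrev Λ : Type := LaurentPolynomial ℤ

/-- The variable `t ∈ Λ`. -/
abbrev tL : Λ := T 1

/-- A medial quandle structure on a type `Q`: an idempotent binary operation whose right
translations are bijections, satisfying the medial law. -/
structure MedialQuandleStr (Q : Type*) where
  op : Q → Q → Q
  idem : ∀ x, op x x = x
  bij : ∀ y, Function.Bijective fun x => op x y
  medial : ∀ w x y z, op (op w x) (op y z) = op (op w y) (op x z)

/-- A quandle structure on a type `T`. -/
structure QuandleStr (T : Type*) where
  op : T → T → T
  idem : ∀ x, op x x = x
  bij : ∀ y, Function.Bijective fun x => op x y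
  distrib : ∀ x y z, op (op x y) z = op (op x z) (op y z)

namespace MedialQuandleStr

variable {Q : Type*} (s : MedialQuandleStr Q)

/-- The translation `β_y : x ↦ x ▷ y`, as a permutation of `Q`. -/
def β (y : Q) : Equiv.Perm Q := Equiv.ofBijective _ (s.bij y)

/-- `β(Q)`: the subgroup of permutations generated by the translations. -/
def transGroup : Subgroup (Equiv.Perm Q) := Subgroup.closure (Set.range s.β)

/-- The displacement group `Dis(Q)`, generated by the elementary displacements
`β_y β_z⁻¹`. -/
def Dis : Subgroup (Equiv.Perm Q) :=
  Subgroup.closure {d : Equiv.Perm Q | ∃ y z, d = s.β y * (s.β z)⁻¹}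

/-- The orbit of `q`: the smallest subset of `Q` containing `q` and closed under the
action of `β(Q)`. -/
def orbit (q : Q) : Set Q := {x | ∃ g ∈ s.transGroup, g q = x}

end MedialQuandleStr

section Construction

variable {M : Type*} [AddCommGroup M] [Module Λ M] {I : Type*}

/-- The carrier of the quandle `Q(N,(m_i),(X_i))`: the disjoint union of the quotients
`Q_i = N/X_i`. -/
def QCar (N : Submodule Λ M) (X : I → Submodule Λ ↥N) : Type _ :=
  Σ i : I, ↥N ⧸ X i

/-- The condition `(1-t)·X_i = 0` for all `i`. -/
def annCond (N : Submodule Λ M) (X : I → Submodule Λ ↥N) : Prop :=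
  ∀ i, ∀ x ∈ X i, (1 - tL) • (x : ↥N) = 0

/-- Multiplication by `1-t`, descended from `N/X_j` to `N` (well defined since
`(1-t)·X_j = 0`). -/
def oneSubT (N : Submodule Λ M) {X : I → Submodule Λ ↥N} (h : annCond N X) (j : I) :
    (↥N ⧸ X j) →ₗ[Λ] ↥N :=
  Submodule.liftQ (X j) ((1 - tL) • (LinearMap.id : ↥N →ₗ[Λ] ↥N))
    (fun x hx => by simpa using h j x hx)

/-- The operation of `Q(N,(m_i),(X_i))`: for `x ∈ Q_i` and `y ∈ Q_j`,
`x ▷ y = m_j - m_i + t·x + (1-t)·y + X_i ∈ Q_i`. -/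
def qop (N : Submodule Λ M) (m : I → M) {X : I → Submodule Λ ↥N}
    (hm : ∀ i j, m i - m j ∈ N) (h : annCond N X) :
    QCar N X → QCar N X → QCar N X :=
  fun x y =>
    ⟨x.1, Submodule.Quotient.mk (⟨m y.1 - m x.1, hm y.1 x.1⟩ : ↥N)
        + tL • x.2 + Submodule.Quotient.mk (oneSubT N h y.1 y.2)⟩

end Construction

/-- Let `Q = Q(N,(m_i),(X_i))` (with medial quandle structure `s`
whose operation is `qop`), and let `N'` be the set of `n ∈ N` such that
`d(x) = x + n + X_i` defines a displacement of `Q`. Then `N'` is a `Λ`-submodule of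
`N`, and `n ↦ d_n` is a surjective `Λ`-linear homomorphism `N' → Dis(Q)`: it is
surjective, carries addition to composition, and carries scalar multiplication by `t` to
conjugation by a translation. -/
theorem stmt13 {M : Type*} [AddCommGroup M] [Module Λ M] {I : Type*} [Nonempty I]
    (N : Submodule Λ M) (m : I → M) (X : I → Submodule Λ ↥N)
    (hm : ∀ i j, m i - m j ∈ N) (h : annCond N X)
    (s : MedialQuandleStr (QCar N X)) (hs : s.op = qop N m hm h) :
    (∃ P : Submodule Λ ↥N, ∀ n : ↥N,
      n ∈ P ↔ ∃ d ∈ s.Dis, ∀ (i : I) (x : ↥N ⧸ X i),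
        d ⟨i, x⟩ = ⟨i, x + Submodule.Quotient.mk n⟩) ∧
    (∀ d ∈ s.Dis, ∃ n : ↥N, ∀ (i : I) (x : ↥N ⧸ X i),
      d ⟨i, x⟩ = ⟨i, x + Submodule.Quotient.mk n⟩) ∧
    (∀ (n n' : ↥N) (dn dn' : Equiv.Perm (QCar N X)),
      (∀ (i : I) (x : ↥N ⧸ X i), dn ⟨i, x⟩ = ⟨i, x + Submodule.Quotient.mk n⟩) →
      (∀ (i : I) (x : ↥N ⧸ X i), dn' ⟨i, x⟩ = ⟨i, x + Submodule.Quotient.mk n'⟩) →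
      ∀ (i : I) (x : ↥N ⧸ X i),
        (dn * dn') ⟨i, x⟩ = ⟨i, x + Submodule.Quotient.mk (n + n')⟩) ∧
    (∀ (n : ↥N) (dn : Equiv.Perm (QCar N X)) (q₀ : QCar N X),
      (∀ (i : I) (x : ↥N ⧸ X i), dn ⟨i, x⟩ = ⟨i, x + Submodule.Quotient.mk n⟩) →
      ∀ (i : I) (x : ↥N ⧸ X i),
        (s.β q₀ * dn * (s.β q₀)⁻¹) ⟨i, x⟩ = ⟨i, x + Submodule.Quotient.mk (tL • n)⟩) := by
  
  classical
  -- basic helpers ------------------------------------------------------------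
  have sig_eq : ∀ (i : I) (a b : ↥N ⧸ X i), a = b → (⟨i, a⟩ : QCar N X) = ⟨i, b⟩ := by
    rintro i a b rfl; rfl
  set c : QCar N X → ∀ i : I, ↥N ⧸ X i := fun q i =>
    Submodule.Quotient.mk (⟨m q.1 - m i, hm q.1 i⟩ : ↥N)
      + Submodule.Quotient.mk (oneSubT N h q.1 q.2) with hc
  have hβapp : ∀ (q z : QCar N X), s.β q z = s.op z q := fun _ _ => rfl
  have hβ : ∀ (q : QCar N X) (i : I) (x : ↥N ⧸ X i),
      s.β q ⟨i, x⟩ = ⟨i, c q i + tL • x⟩ := by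
    intro q i x
    erw [hβapp, hs]
    exact sig_eq i _ _ (by rw [hc]; abel_nf; exact add_left_comm _ _ _)
  have key : ∀ (i : I) (v : ↥N ⧸ X i), tL • ((T (-1) : Λ) • v) = v := by
    intro i v
    rw [smul_smul, ← T_add]
    norm_num
  have key' : ∀ (i : I) (v : ↥N ⧸ X i), (T (-1) : Λ) • (tL • v) = v := by
    intro i v
    rw [smul_smul, ← T_add]
    norm_num
  have hβinv : ∀ (q : QCar N X) (i : I) (x : ↥N ⧸ X i),
      (s.β q)⁻¹ ⟨i, x⟩ = ⟨i, (T (-1) : Λ) • (x - c q i)⟩ := by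
    intro q i x
    apply (s.β q).injective
    erw [(fun (f : Equiv.Perm (QCar N X)) x => (show f (f⁻¹ x) = x from f.apply_symm_apply x)), hβ]
    exact (sig_eq i _ _ (by rw [key]; abel)).symm
  -- the value of a generator ---------------------------------------------------
  set nv : QCar N X → QCar N X → ↥N := fun y z =>
    (⟨m y.1 - m z.1, hm y.1 z.1⟩ : ↥N) + oneSubT N h y.1 y.2 - oneSubT N h z.1 z.2 with hnv
  have hgen : ∀ (y z : QCar N X) (i : I) (x : ↥N ⧸ X i),
      (s.β y * (s.β z)⁻¹) ⟨i, x⟩ = ⟨i, x + Submodule.Quotient.mk (nv y z)⟩ := by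
    intro y z i x
    have hsub : (⟨m y.1 - m z.1, hm y.1 z.1⟩ : ↥N)
        = ⟨m y.1 - m i, hm y.1 i⟩ - ⟨m z.1 - m i, hm z.1 i⟩ := by
      apply Subtype.ext
      simp only [AddSubgroupClass.coe_sub]
      abel
    erw [Equiv.Perm.mul_apply, hβinv, hβ]
    refine sig_eq i _ _ ?_
    rw [key, hnv, hc]
    simp only [hsub, Submodule.Quotient.mk_add, Submodule.Quotient.mk_sub]
    abel
  -- pointwise computations for products, inverses, conjugates ------------------
  have hmul : ∀ (n n' : ↥N) (dn dn' : Equiv.Perm (QCar N X)),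
      (∀ (i : I) (x : ↥N ⧸ X i), dn ⟨i, x⟩ = ⟨i, x + Submodule.Quotient.mk n⟩) →
      (∀ (i : I) (x : ↥N ⧸ X i), dn' ⟨i, x⟩ = ⟨i, x + Submodule.Quotient.mk n'⟩) →
      ∀ (i : I) (x : ↥N ⧸ X i),
        (dn * dn') ⟨i, x⟩ = ⟨i, x + Submodule.Quotient.mk (n + n')⟩ := by
    intro n n' dn dn' hdn hdn' i x
    erw [Equiv.Perm.mul_apply, hdn', hdn]
    exact sig_eq i _ _ (by rw [Submodule.Quotient.mk_add]; abel)
  have hinv : ∀ (n : ↥N) (dn : Equiv.Perm (QCar N X)),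
      (∀ (i : I) (x : ↥N ⧸ X i), dn ⟨i, x⟩ = ⟨i, x + Submodule.Quotient.mk n⟩) →
      ∀ (i : I) (x : ↥N ⧸ X i),
        dn⁻¹ ⟨i, x⟩ = ⟨i, x + Submodule.Quotient.mk (-n)⟩ := by
    intro n dn hdn i x
    apply dn.injective
    erw [(fun (f : Equiv.Perm (QCar N X)) x => (show f (f⁻¹ x) = x from f.apply_symm_apply x)), hdn]
    exact (sig_eq i _ _ (by rw [Submodule.Quotient.mk_neg]; abel)).symm
  have hconj4 : ∀ (n : ↥N) (dn : Equiv.Perm (QCar N X)) (q₀ : QCar N X),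
      (∀ (i : I) (x : ↥N ⧸ X i), dn ⟨i, x⟩ = ⟨i, x + Submodule.Quotient.mk n⟩) →
      ∀ (i : I) (x : ↥N ⧸ X i),
        (s.β q₀ * dn * (s.β q₀)⁻¹) ⟨i, x⟩ = ⟨i, x + Submodule.Quotient.mk (tL • n)⟩ := by
    intro n dn q₀ hdn i x
    erw [Equiv.Perm.mul_apply, Equiv.Perm.mul_apply, hβinv, hdn, hβ]
    refine sig_eq i _ _ ?_
    rw [smul_add, key, Submodule.Quotient.mk_smul]
    abel
  -- distributivity and normality of Dis ----------------------------------------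
  have hdist : ∀ x y z : QCar N X, s.op (s.op x y) z = s.op (s.op x z) (s.op y z) := by
    intro x y z
    have := s.medial x y z z
    rwa [s.idem] at this
  have hββ : ∀ q y : QCar N X, s.β q * s.β y = s.β (s.β q y) * s.β q := by
    intro q y
    ext x
    simp only [Equiv.Perm.mul_apply, hβapp]
    exact hdist x y q
  have a1 : ∀ q y : QCar N X, s.β q * s.β y * (s.β q)⁻¹ = s.β (s.β q y) := by
    intro q y
    rw [hββ]
    group
  have a1' : ∀ q y : QCar N X, (s.β q)⁻¹ * s.β y * s.β q = s.β ((s.β q)⁻¹ y) := by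
    intro q y
    have := a1 q ((s.β q)⁻¹ y)
    rw [(fun (f : Equiv.Perm (QCar N X)) x => (show f (f⁻¹ x) = x from f.apply_symm_apply x))] at this
    rw [← this]
    group
  have hconjDis : ∀ (q : QCar N X), ∀ d ∈ s.Dis, s.β q * d * (s.β q)⁻¹ ∈ s.Dis := by
    intro q d hd
    have hd' : d ∈ Subgroup.closure {d : Equiv.Perm (QCar N X) | ∃ y z, d = s.β y * (s.β z)⁻¹} := hd
    clear hd
    induction hd' using Subgroup.closure_induction with
    | mem g hg =>
        obtain ⟨y, z, rfl⟩ := hg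
        have h1 : s.β q * (s.β y * (s.β z)⁻¹) * (s.β q)⁻¹
            = s.β (s.β q y) * (s.β (s.β q z))⁻¹ := by
          rw [← a1 q y, ← a1 q z]
          group
        rw [h1]
        exact Subgroup.subset_closure ⟨_, _, rfl⟩
    | one => simpa using one_mem s.Dis
    | mul a b ha hb pa pb =>
        have e : s.β q * (a * b) * (s.β q)⁻¹
            = (s.β q * a * (s.β q)⁻¹) * (s.β q * b * (s.β q)⁻¹) := by group
        rw [e]; exact mul_mem pa pb
    | inv a ha pa =>
        have e : s.β q * a⁻¹ * (s.β q)⁻¹ = (s.β q * a * (s.β q)⁻¹)⁻¹ := by group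
        rw [e]; exact inv_mem pa
  have hconjDis' : ∀ (q : QCar N X), ∀ d ∈ s.Dis, (s.β q)⁻¹ * d * s.β q ∈ s.Dis := by
    intro q d hd
    have hd' : d ∈ Subgroup.closure {d : Equiv.Perm (QCar N X) | ∃ y z, d = s.β y * (s.β z)⁻¹} := hd
    clear hd
    induction hd' using Subgroup.closure_induction with
    | mem g hg =>
        obtain ⟨y, z, rfl⟩ := hg
        have h1 : (s.β q)⁻¹ * (s.β y * (s.β z)⁻¹) * s.β q
            = s.β ((s.β q)⁻¹ y) * (s.β ((s.β q)⁻¹ z))⁻¹ := by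
          rw [← a1' q y, ← a1' q z]
          group
        rw [h1]
        exact Subgroup.subset_closure ⟨_, _, rfl⟩
    | one => simpa using one_mem s.Dis
    | mul a b ha hb pa pb =>
        have e : (s.β q)⁻¹ * (a * b) * s.β q
            = ((s.β q)⁻¹ * a * s.β q) * ((s.β q)⁻¹ * b * s.β q) := by group
        rw [e]; exact mul_mem pa pb
    | inv a ha pa =>
        have e : (s.β q)⁻¹ * a⁻¹ * s.β q = ((s.β q)⁻¹ * a * s.β q)⁻¹ := by group
        rw [e]; exact inv_mem pa
  -- surjectivity -----------------------------------------------------------------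
  have hsurj : ∀ d ∈ s.Dis, ∃ n : ↥N, ∀ (i : I) (x : ↥N ⧸ X i),
      d ⟨i, x⟩ = ⟨i, x + Submodule.Quotient.mk n⟩ := by
    intro d hd
    have hd' : d ∈ Subgroup.closure {d : Equiv.Perm (QCar N X) | ∃ y z, d = s.β y * (s.β z)⁻¹} := hd
    clear hd
    induction hd' using Subgroup.closure_induction with
    | mem g hg =>
        obtain ⟨y, z, rfl⟩ := hg
        exact ⟨nv y z, hgen y z⟩
    | one =>
        refine ⟨0, fun i x => ?_⟩
        simp; rfl
    | mul a b ha hb pa pb =>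
        obtain ⟨n, hn⟩ := pa
        obtain ⟨n', hn'⟩ := pb
        exact ⟨n + n', hmul n n' a b hn hn'⟩
    | inv a ha pa =>
        obtain ⟨n, hn⟩ := pa
        exact ⟨-n, hinv n a hn⟩
  -- the submodule ------------------------------------------------------------------
  set pp : ↥N → Prop := fun n => ∃ d ∈ s.Dis, ∀ (i : I) (x : ↥N ⧸ X i),
      d ⟨i, x⟩ = ⟨i, x + Submodule.Quotient.mk n⟩ with hpp
  obtain ⟨i₀⟩ := ‹Nonempty I›
  set q₀ : QCar N X := ⟨i₀, 0⟩ with hq₀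
  have hzero : pp 0 := by
    refine ⟨1, one_mem _, fun i x => ?_⟩
    simp; rfl
  have hadd : ∀ n n', pp n → pp n' → pp (n + n') := by
    rintro n n' ⟨d, hd, hdn⟩ ⟨d', hd', hdn'⟩
    exact ⟨d * d', mul_mem hd hd', hmul n n' d d' hdn hdn'⟩
  have hneg : ∀ n, pp n → pp (-n) := by
    rintro n ⟨d, hd, hdn⟩
    exact ⟨d⁻¹, inv_mem hd, hinv n d hdn⟩
  have hT : ∀ n, pp n → pp (tL • n) := by
    rintro n ⟨d, hd, hdn⟩
    exact ⟨_, hconjDis q₀ d hd, hconj4 n d q₀ hdn⟩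
  have hTinv : ∀ n, pp n → pp ((T (-1) : Λ) • n) := by
    rintro n ⟨d, hd, hdn⟩
    refine ⟨(s.β q₀)⁻¹ * d * s.β q₀, hconjDis' q₀ d hd, fun i x => ?_⟩
    erw [Equiv.Perm.mul_apply, Equiv.Perm.mul_apply, hβ, hdn, hβinv]
    refine sig_eq i _ _ ?_
    have e : c q₀ i + tL • x + Submodule.Quotient.mk n - c q₀ i
        = tL • x + Submodule.Quotient.mk n := by abel
    rw [e, smul_add, key', Submodule.Quotient.mk_smul]
  have hzsmul : ∀ (a : ℤ) (n : ↥N), pp n → pp (a • n) := by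
    intro a
    induction a using Int.induction_on with
    | zero => intro n _; simpa using hzero
    | succ k ih =>
        intro n hn
        have := hadd _ _ (ih n hn) hn
        rw [add_smul, one_smul]
        exact this
    | pred k ih =>
        intro n hn
        have := hadd _ _ (ih n hn) (hneg n hn)
        rw [sub_smul, one_smul, sub_eq_add_neg]
        exact this
  have hTk : ∀ (k : ℤ) (n : ↥N), pp n → pp ((T k : Λ) • n) := by
    intro k
    induction k using Int.induction_on with
    | zero => intro n hn; simpa [T_zero] using hn
    | succ k ih =>
        intro n hn
        have h2 := hT _ (ih n hn)
        have e : ((T ((k : ℤ) + 1) : Λ)) • n = tL • ((T (k : ℤ) : Λ) • n) := by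
          rw [add_comm, T_add, mul_smul]
        rw [e]
        exact h2
    | pred k ih =>
        intro n hn
        have h2 := hTinv _ (ih n hn)
        have e : ((T (-(k : ℤ) - 1) : Λ)) • n = (T (-1) : Λ) • ((T (-(k : ℤ)) : Λ) • n) := by
          rw [show (-(k : ℤ) - 1) = -1 + -(k : ℤ) by ring, T_add, mul_smul]
        rw [e]
        exact h2
  have hsmul : ∀ (r : Λ) (n : ↥N), pp n → pp (r • n) := by
    intro r
    induction r using LaurentPolynomial.induction_on' with
    | add p q hp hq =>
        intro n hn
        rw [add_smul]
        exact hadd _ _ (hp n hn) (hq n hn)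
    | C_mul_T k a =>
        intro n hn
        have h1 := hTk k n hn
        have e : ((C a : Λ) * T k) • n = a • ((T k : Λ) • n) := by
          rw [mul_smul, show (C a : Λ) = ((a : ℤ) : Λ) from eq_intCast (C : ℤ →+* Λ) a,
            Int.cast_smul_eq_zsmul]
        rw [e]
        exact hzsmul a _ h1
  refine ⟨⟨{ carrier := setOf pp
             add_mem' := fun ha hb => hadd _ _ ha hb
             zero_mem' := hzero
             smul_mem' := fun r n hn => hsmul r n hn }, fun n => Iff.rfl⟩,
         hsurj, hmul, hconj4⟩
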